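/- Let Σ be a finite alphabet, ∼ an equivalence relation on Σ, and G ⊆ Σ* a finite set of guides. If L is a regular language over Σ, then the language L_G = { v ∈ Σ* | ∃ u ∈ L : u ⇒* v } is regular. -/

import Mathlib

/-- A guided rewrite step: some substring `y` of `u` that is elementwise
adjustment-equivalent to a guide `g ∈ G` is replaced by `g`. -/
def GuidedStep {α : Type} (sim : α → α → Prop) (G : Set (List α)) (u v : List α) : Prop :=
  ∃ g ∈ G, ∃ x y z : List α, u = x ++ y ++ z ∧ v = x ++ g ++ z ∧ List.Forall₂ sim y g

open List

namespace GRW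

variable {α : Type} (sim : α → α → Prop) (G : Set (List α))

/-- a guide: element of G -/
abbrev Gd := {g : List α // g ∈ G}
/-- a stack entry: a guide together with an offset into it -/
abbrev Ent := Σ g : Gd G, Fin g.1.length
def eltr (e : Ent G) : α := e.1.1.get e.2
/-- a write: a guide placed at a position -/
abbrev Wr := Gd G × ℕ
def wlen (w : Wr G) : ℕ := w.1.1.length
def covers (w : Wr G) (i : ℕ) : Prop := w.2 ≤ i ∧ i < w.2 + wlen G w

instance (w : Wr G) (i : ℕ) : Decidable (covers G w i) := by unfold covers; infer_instance

def inb (n : ℕ) (w : Wr G) : Prop := w.2 + wlen G w ≤ n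

def appOK (u : List α) (w : Wr G) : Prop :=
  inb G u.length w ∧ Forall₂ sim ((u.drop w.2).take (wlen G w)) w.1.1

def apply1 (w : Wr G) (u : List α) : List α :=
  u.take w.2 ++ w.1.1 ++ u.drop (w.2 + wlen G w)

def ovl (u : List α) (ws : List (Wr G)) : List α := ws.foldl (fun x w => apply1 G w x) u

/-- pointwise value of an overlay described by a top-first list of writes -/
def resolve (os : List (Wr G)) (u : List α) (i : ℕ) : Option α :=
  match os.find? (fun w => decide (covers G w i)) with
  | some w => w.1.1[i - w.2]?
  | none => u[i]?

@[simp] lemma length_apply1 (w : Wr G) (u : List α) (h : inb G u.length w) :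
    (apply1 G w u).length = u.length := by
  simp [apply1, wlen] at *; unfold inb wlen at h; omega

lemma apply1_get? (w : Wr G) (u : List α) (h : inb G u.length w) (i : ℕ) :
    (apply1 G w u)[i]? = if covers G w i then w.1.1[i - w.2]? else u[i]? := by
  unfold inb wlen at h
  rcases w with ⟨g, p⟩
  simp only [apply1, wlen] at *
  rcases Nat.lt_or_ge i p with hi | hi
  · rw [if_neg (by simp only [covers, wlen]; omega)]
    rw [getElem?_append_left (by simp; omega), getElem?_append_left (by simp; omega),
      getElem?_take_of_lt hi]
  rcases Nat.lt_or_ge i (p + g.1.length) with hi2 | hi2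
  · rw [if_pos (by simp only [covers, wlen]; omega)]
    rw [getElem?_append_left (by simp; omega), getElem?_append_right (by simp; omega)]
    congr 1
    simp; omega
  · rw [if_neg (by simp only [covers, wlen]; omega)]
    rw [getElem?_append_right (by simp; omega), getElem?_drop]
    congr 1
    simp; omega

lemma ovl_length (u : List α) (ws : List (Wr G)) (h : ∀ w ∈ ws, inb G u.length w) :
    (ovl G u ws).length = u.length := by
  induction ws generalizing u with
  | nil => rfl
  | cons w ws ih =>
    have h1 : inb G u.length w := h w (by simp)
    have := length_apply1 G w u h1
    simp only [ovl, foldl_cons]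
    rw [show foldl (fun x w => apply1 G w x) (apply1 G w u) ws = ovl G (apply1 G w u) ws from rfl,
      ih _ (fun w' hw' => by unfold inb at *; rw [this]; exact h w' (by simp [hw']))]
    exact this

lemma ovl_get? (u : List α) (ws : List (Wr G)) (h : ∀ w ∈ ws, inb G u.length w) (i : ℕ) :
    (ovl G u ws)[i]? = resolve G ws.reverse u i := by
  induction ws generalizing u with
  | nil => simp [ovl, resolve]
  | cons w ws ih =>
    have h1 : inb G u.length w := h w (by simp)
    have hlen := length_apply1 G w u h1
    have hrec := ih (apply1 G w u)
      (fun w' hw' => by unfold inb at *; rw [hlen]; exact h w' (by simp [hw'])) 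
    simp only [ovl, foldl_cons] at hrec ⊢
    rw [hrec]
    simp only [resolve, reverse_cons, find?_append]
    rcases hfind : ws.reverse.find? (fun w => decide (covers G w i)) with _ | w'
    · simp only [Option.or_none, find?_singleton]
      by_cases hc : covers G w i
      · simp [hc, apply1_get? G w u h1 i]
      · simp [hc, apply1_get? G w u h1 i]
    · simp [Option.or_some, apply1_get? G w u h1 i]

variable {sim} {G}

lemma f2_comp {β : Type} {R S T : β → β → Prop} :
    ∀ {a b c : List β}, (∀ x y z, R x y → S y z → T x z) →
      Forall₂ R a b → Forall₂ S b c → Forall₂ T a c := by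
  intro a b c h hab hbc
  induction hab generalizing c with
  | nil => cases hbc; exact Forall₂.nil
  | cons h1 h2 ih =>
    cases hbc with
    | cons h3 h4 => exact Forall₂.cons (h _ _ _ h1 h3) (ih h4)

lemma f2_symm {β : Type} {R S : β → β → Prop} :
    ∀ {a b : List β}, (∀ x y, R x y → S y x) → Forall₂ R a b → Forall₂ S b a := by
  intro a b h hab
  induction hab with
  | nil => exact Forall₂.nil
  | cons h1 _ ih => exact Forall₂.cons (h _ _ h1) ih

lemma appOK_sim (hsim : Equivalence sim) {u : List α} {w : Wr G} (h : appOK sim G u w)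
    {i : ℕ} (hc : covers G w i) :
    ∃ a b, u[i]? = some a ∧ w.1.1[i - w.2]? = some b ∧ sim a b := by
  obtain ⟨hb, hf⟩ := h
  rw [forall₂_iff_get] at hf
  obtain ⟨hlen, hget⟩ := hf
  obtain ⟨hc1, hc2⟩ := hc
  unfold inb wlen at hb
  unfold wlen at hc2
  have h2 : i - w.2 < (w.1.1).length := by omega
  have h1 : i - w.2 < ((u.drop w.2).take (wlen G w)).length := hlen ▸ h2
  have hiu : i < u.length := by omega
  have hs := hget (i - w.2) h1 h2
  have hval : ((u.drop w.2).take (wlen G w)).get ⟨i - w.2, h1⟩ = u[i] := by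
    simp only [get_eq_getElem, getElem_take, getElem_drop]
    congr 1
    omega
  rw [hval] at hs
  exact ⟨u[i], w.1.1[i - w.2], getElem?_eq_getElem hiu, getElem?_eq_getElem h2, by simpa using hs⟩

lemma sim_ovl (hsim : Equivalence sim) (u : List α) (ws : List (Wr G))
    (h : ∀ w ∈ ws, appOK sim G u w) : Forall₂ sim u (ovl G u ws) := by
  have hb : ∀ w ∈ ws, inb G u.length w := fun w hw => (h w hw).1
  rw [forall₂_iff_get]
  refine ⟨(ovl_length G u ws hb).symm, fun i h1 h2 => ?_⟩
  have hov := ovl_get? G u ws hb i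
  rcases hfind : ws.reverse.find? (fun w => decide (covers G w i)) with _ | w
  · have hres : (ovl G u ws)[i]? = u[i]? := by rw [hov, resolve, hfind]
    rw [getElem?_eq_getElem h2, getElem?_eq_getElem h1, Option.some_inj] at hres
    simp only [get_eq_getElem]
    rw [hres]
    exact hsim.refl _
  · have hw : w ∈ ws := by
      have := mem_of_find?_eq_some hfind; simpa using this
    have hc : covers G w i := by
      have := find?_some hfind; simpa using this
    obtain ⟨a, b, ha, hb', hab⟩ := appOK_sim hsim (h w hw) hc
    have hres : (ovl G u ws)[i]? = w.1.1[i - w.2]? := by rw [hov, resolve, hfind]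
    rw [getElem?_eq_getElem h2, hb', Option.some_inj] at hres
    rw [getElem?_eq_getElem h1, Option.some_inj] at ha
    simp only [get_eq_getElem]
    rw [ha, hres]
    exact hab

lemma guided_iff_ovl (hsim : Equivalence sim) (u v : List α) :
    Relation.ReflTransGen (GuidedStep sim G) u v ↔
      ∃ ws : List (Wr G), (∀ w ∈ ws, appOK sim G u w) ∧ v = ovl G u ws := by
  constructor
  · intro h
    induction h with
    | refl => exact ⟨[], by simp, rfl⟩
    | tail hst hgs ih =>
      rename_i w' v'
      obtain ⟨ws, hws, hov⟩ := ih
      obtain ⟨g, hg, x, y, z, hw', hv', hyg⟩ := hgs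
      have hly : y.length = g.length := hyg.length_eq
      have hsimw : Forall₂ sim u w' := hov ▸ sim_ovl hsim u ws hws
      have hlen : u.length = w'.length := hsimw.length_eq
      refine ⟨ws ++ [(⟨g, hg⟩, x.length)], ?_, ?_⟩
      · intro w hw
        rcases mem_append.1 hw with hw | hw
        · exact hws w hw
        · simp only [mem_singleton] at hw
          subst hw
          constructor
          · unfold inb wlen
            simp only
            rw [hlen, hw']
            simp; omega
          · have h1 : Forall₂ sim ((u.drop x.length).take (wlen G (⟨g, hg⟩, x.length)))
                ((w'.drop x.length).take (wlen G (⟨g, hg⟩, x.length))) :=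
              forall₂_take _ (forall₂_drop _ hsimw)
            have h2 : (w'.drop x.length).take (wlen G (⟨g, hg⟩, x.length)) = y := by
              rw [hw']
              unfold wlen
              simp only
              rw [append_assoc, drop_left, ← hly, take_left]
            rw [h2] at h1
            exact f2_comp (R := sim) (S := sim) (T := sim) (fun a b c hab hbc => hsim.trans hab hbc) h1 hyg
      · have hsplit : ovl G u (ws ++ [(⟨g, hg⟩, x.length)]) =
            apply1 G (⟨g, hg⟩, x.length) (ovl G u ws) := by
          rw [ovl, foldl_append]; rfl
        rw [hsplit, ← hov, hv']
        unfold apply1 wlen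
        simp only
        rw [hw']
        congr 1
        · congr 1
          rw [append_assoc, take_left]
        · rw [← hly, show x.length + y.length = (x ++ y).length by simp, drop_left]
  · rintro ⟨ws, hws, rfl⟩
    induction ws using List.reverseRecOn with
    | nil => exact Relation.ReflTransGen.refl
    | append_singleton ws w ih =>
      have hws' : ∀ w' ∈ ws, appOK sim G u w' := fun w' hw' => hws w' (by simp [hw'])
      refine Relation.ReflTransGen.tail (ih hws') ?_
      set w' := ovl G u ws with hw'def
      have hstep : ovl G u (ws ++ [w]) = apply1 G w w' := by
        rw [ovl, foldl_append]; rfl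
      rw [hstep]
      have hsimw : Forall₂ sim u w' := sim_ovl hsim u ws hws'
      have hlen : u.length = w'.length := hsimw.length_eq
      have hok := hws w (by simp)
      obtain ⟨hb, hf⟩ := hok
      unfold inb at hb
      refine ⟨w.1.1, w.1.2, w'.take w.2, (w'.drop w.2).take (wlen G w), w'.drop (w.2 + wlen G w),
        ?_, ?_, ?_⟩
      · have h3 : (w'.drop w.2).drop (wlen G w) = w'.drop (w.2 + wlen G w) := by
          rw [List.drop_drop, Nat.add_comm]
        rw [append_assoc, ← h3, take_append_drop, take_append_drop]
      · rfl
      · have h1 : Forall₂ sim ((u.drop w.2).take (wlen G w)) ((w'.drop w.2).take (wlen G w)) :=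
          forall₂_take _ (forall₂_drop _ hsimw)
        have h2 : Forall₂ sim ((w'.drop w.2).take (wlen G w)) ((u.drop w.2).take (wlen G w)) :=
          f2_symm (fun x y hxy => hsim.symm hxy) h1
        exact f2_comp (R := sim) (S := sim) (T := sim) (fun a b c hab hbc => hsim.trans hab hbc) h2 hf

/-! ### Stack certificates -/

variable (sim) (G)

def shiftE (e : Ent G) : Option (Ent G) :=
  if h : (e.2 : ℕ) + 1 < e.1.1.length then some ⟨e.1, ⟨(e.2 : ℕ) + 1, h⟩⟩ else none

def shift (s : List (Ent G)) : List (Ent G) := s.filterMap (shiftE G)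

def nxt (s t : List (Ent G)) : Prop :=
  t.filter (fun e => decide ((e.2 : ℕ) ≠ 0)) = shift G s

def stkOf (ss : List (List (Ent G))) (i : ℕ) : List (Ent G) := (ss[i]?).getD []

def outv (u : List α) (ss : List (List (Ent G))) (i : ℕ) : Option α :=
  match (stkOf G ss i).head? with
  | some e => some (eltr G e)
  | none => u[i]?

def Cert' (u v : List α) (ss : List (List (Ent G))) : Prop :=
  ss.length = u.length ∧ v.length = u.length ∧
  List.Chain' (nxt G) ([] :: ss) ∧
  (∀ s ∈ ss, s.Nodup) ∧
  (∀ i, ∀ e ∈ stkOf G ss i, ∃ a, u[i]? = some a ∧ sim a (eltr G e)) ∧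
  (∀ i, v[i]? = outv G u ss i)

def Pspec (u v : List α) : Prop :=
  ∃ os : List (Wr G), os.Nodup ∧ (∀ w ∈ os, appOK sim G u w) ∧ v.length = u.length ∧
    ∀ i, v[i]? = resolve G os u i

lemma find?_dedup_reverse {β : Type} [DecidableEq β] (l : List β) (p : β → Bool) :
    l.dedup.reverse.find? p = l.reverse.find? p := by
  induction l with
  | nil => rfl
  | cons a l ih =>
    by_cases ha : a ∈ l
    · rw [dedup_cons_of_mem ha, ih, reverse_cons, find?_append]
      rcases hf : l.reverse.find? p with _ | x
      · have : ¬ p a = true := by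
          have := find?_eq_none.1 hf
          exact this a (by simp [ha])
        simp [find?, this]
      · simp
    · rw [dedup_cons_of_notMem ha, reverse_cons, reverse_cons, find?_append, find?_append, ih]

lemma reach_iff_P (hsim : Equivalence sim) (u v : List α) :
    Relation.ReflTransGen (GuidedStep sim G) u v ↔ Pspec sim G u v := by
  classical
  rw [guided_iff_ovl hsim]
  constructor
  · rintro ⟨ws, hws, rfl⟩
    have hb : ∀ w ∈ ws, inb G u.length w := fun w hw => (hws w hw).1
    refine ⟨ws.dedup.reverse, by simp [List.nodup_reverse, nodup_dedup], ?_, ovl_length G u ws hb, ?_⟩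
    · intro w hw
      exact hws w (by simpa [mem_dedup] using hw)
    · intro i
      rw [ovl_get? G u ws hb i]
      unfold resolve
      rw [find?_dedup_reverse]
  · rintro ⟨os, hnd, hos, hlen, hres⟩
    have hb : ∀ w ∈ os.reverse, inb G u.length w := fun w hw => (hos w (by simpa using hw)).1
    refine ⟨os.reverse, fun w hw => hos w (by simpa using hw), ?_⟩
    apply List.ext_getElem?
    intro i
    rw [ovl_get? G u os.reverse hb i, reverse_reverse, hres i]

/-! ### generic list helper lemmas -/

lemma head?_filterMap {β γ : Type} (f : β → Option γ) (l : List β) :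
    (l.filterMap f).head? = (l.find? (fun a => (f a).isSome)).bind f := by
  induction l with
  | nil => rfl
  | cons a l ih =>
    rw [filterMap_cons]
    rcases hf : f a with _ | b
    · rw [find?_cons_of_neg (by simp [hf]), ih]
    · rw [find?_cons_of_pos (by simp [hf])]
      simp [hf]

lemma cons_sublist_decomp {β : Type} {a : β} :
    ∀ {l L : List β}, (a :: l).Sublist L → ∃ r1 r2, L = r1 ++ a :: r2 ∧ l.Sublist r2 := by
  intro l L
  induction L generalizing l with
  | nil => intro h; exact absurd h (by simp)
  | cons b L ih =>
    intro h
    cases h with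
    | cons _ h =>
      obtain ⟨r1, r2, rfl, hs⟩ := ih h
      exact ⟨b :: r1, r2, rfl, hs⟩
    | cons_cons _ h => exact ⟨[], L, rfl, h⟩

lemma ins_lemma {β : Type} (Q : β → Bool) :
    ∀ (c L : List β), c.Nodup → (c.filter Q).Sublist L →
      (∀ x ∈ c, Q x = false → x ∉ L) → L.Nodup →
      ∃ L', L.Sublist L' ∧ c.Sublist L' ∧ L'.Nodup ∧ ∀ x ∈ L', x ∈ L ∨ x ∈ c := by
  intro c
  induction c with
  | nil => intro L _ _ _ hnd; exact ⟨L, Sublist.refl L, nil_sublist L, hnd, fun x hx => Or.inl hx⟩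
  | cons a c ih =>
    intro L hnd hsub hfresh hndL
    rcases hQ : Q a with _ | _
    · -- Q a = false
      obtain ⟨L'', h1, h2, h3, h4⟩ := ih L (nodup_cons.1 hnd).2
        (by rwa [filter_cons_of_neg (by simp [hQ])] at hsub)
        (fun x hx hQx => hfresh x (mem_cons_of_mem a hx) hQx) hndL
      refine ⟨a :: L'', h1.trans (sublist_cons_self a L''), h2.cons_cons a, ?_, ?_⟩
      · rw [nodup_cons]
        refine ⟨fun hmem => ?_, h3⟩
        rcases h4 a hmem with h | h
        · exact hfresh a (mem_cons_self) hQ h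
        · exact (nodup_cons.1 hnd).1 h
      · intro x hx
        rcases mem_cons.1 hx with rfl | hx
        · exact Or.inr (mem_cons_self)
        · rcases h4 x hx with h | h
          · exact Or.inl h
          · exact Or.inr (mem_cons_of_mem a h)
    · -- Q a = true
      rw [filter_cons_of_pos (by simp [hQ])] at hsub
      obtain ⟨r1, r2, rfl, hsub2⟩ := cons_sublist_decomp hsub
      have hr2L : r2.Sublist (r1 ++ a :: r2) :=
        ((sublist_cons_self a r2).trans (sublist_append_right r1 _))
      have hndr2 : r2.Nodup := hndL.sublist hr2L
      obtain ⟨r2', h1, h2, h3, h4⟩ := ih r2 (nodup_cons.1 hnd).2 hsub2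
        (fun x hx hQx => fun hmem => hfresh x (mem_cons_of_mem a hx) hQx (hr2L.mem hmem)) hndr2
      refine ⟨r1 ++ a :: r2', ?_, ?_, ?_, ?_⟩
      · exact Sublist.append (Sublist.refl r1) (h1.cons_cons a)
      · exact (h2.cons_cons a).trans (sublist_append_right r1 _)
      · rw [nodup_append] at hndL ⊢
        obtain ⟨hnd1, hnd2, hdisj⟩ := hndL
        replace hdisj : ∀ {x}, x ∈ r1 → x ∈ a :: r2 → False := fun h1 h2 => hdisj _ h1 _ h2 rfl
        refine ⟨hnd1, ?_, ?_⟩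
        · rw [nodup_cons] at hnd2 ⊢
          refine ⟨fun hmem => ?_, h3⟩
          rcases h4 a hmem with h | h
          · exact hnd2.1 h
          · exact (nodup_cons.1 hnd).1 h
        · intro x hx1 y hx2 hxy; subst hxy
          rcases mem_cons.1 hx2 with rfl | hx2
          · exact hdisj hx1 (mem_cons_self)
          · rcases h4 x hx2 with h | h
            · exact hdisj hx1 (mem_cons_of_mem a h)
            · rcases hQ2 : Q x with _ | _
              · exact hfresh x (mem_cons_of_mem a h) hQ2 (mem_append.2 (Or.inl hx1))
              · have : x ∈ c.filter Q := mem_filter.2 ⟨h, hQ2⟩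
                have : x ∈ r2 := hsub2.mem this
                exact hdisj hx1 (mem_cons_of_mem a this)
      · intro x hx
        rcases mem_append.1 hx with hx | hx
        · exact Or.inl (mem_append.2 (Or.inl hx))
        · rcases mem_cons.1 hx with rfl | hx
          · exact Or.inr (mem_cons_self)
          · rcases h4 x hx with h | h
            · exact Or.inl (mem_append.2 (Or.inr (mem_cons_of_mem a h)))
            · exact Or.inr (mem_cons_of_mem a h)

lemma find?_eq_head? {β : Type} (p : β → Bool) :
    ∀ {c os : List β}, c.Sublist os → os.Nodup → (∀ x ∈ os, p x = true ↔ x ∈ c) →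
      (∀ x ∈ c, p x = true) → os.find? p = c.head? := by
  intro c os hsub
  induction hsub with
  | slnil => intro _ _ _; rfl
  | @cons c os' a hsub ih =>
    intro hnd hiff hall
    have hpa : ¬ p a = true := by
      intro hpa
      have : a ∈ c := (hiff a (mem_cons_self)).1 hpa
      exact (nodup_cons.1 hnd).1 (hsub.mem this)
    rw [find?_cons_of_neg hpa]
    exact ih (nodup_cons.1 hnd).2 (fun x hx => hiff x (mem_cons_of_mem a hx)) hall
  | @cons_cons c os' a hsub ih =>
    intro hnd hiff hall
    rw [find?_cons_of_pos (hall a (mem_cons_self))]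
    rfl

/-! ### stack chain lemmas -/

variable {ss : List (List (Ent G))}

lemma ent_eq {g : Gd G} {k k' : ℕ} (h : k < g.1.length) (h' : k' < g.1.length) (hk : k = k') :
    (⟨g, ⟨k, h⟩⟩ : Ent G) = ⟨g, ⟨k', h'⟩⟩ := by subst hk; rfl

lemma stkOf_lt {i : ℕ} (h : i < ss.length) : stkOf G ss i = ss[i] := by
  unfold stkOf; rw [getElem?_eq_getElem h]; rfl

lemma stkOf_ge {i : ℕ} (h : ss.length ≤ i) : stkOf G ss i = [] := by
  unfold stkOf; rw [getElem?_eq_none h]; rfl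

lemma mem_stk_lt {i : ℕ} {e : Ent G} (h : e ∈ stkOf G ss i) : i < ss.length := by
  by_contra hc
  rw [stkOf_ge G (by omega)] at h
  exact absurd h (not_mem_nil)

lemma getLastD_stk : ss.getLastD [] = stkOf G ss (ss.length - 1) := by
  unfold stkOf; rw [getLastD_eq_getLast?, getLast?_eq_getElem?]

lemma chain_zero (hch : List.Chain' (nxt G) ([] :: ss)) (h : 0 < ss.length) :
    nxt G [] (stkOf G ss 0) := by
  have := (isChain_iff_getElem.1 hch) 0 (by simp; omega)
  simpa [stkOf_lt G h] using this

lemma chain_succ (hch : List.Chain' (nxt G) ([] :: ss)) {i : ℕ} (h : i + 1 < ss.length) :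
    nxt G (stkOf G ss i) (stkOf G ss (i + 1)) := by
  have := (isChain_iff_getElem.1 hch) (i + 1) (by simp; omega)
  simpa [stkOf_lt G h, stkOf_lt G (by omega : i < ss.length)] using this

lemma succ_mem (hch : List.Chain' (nxt G) ([] :: ss)) (hf : shift G (ss.getLastD []) = [])
    {i : ℕ} {e : Ent G} (he : e ∈ stkOf G ss i) (h : (e.2 : ℕ) + 1 < e.1.1.length) :
    i + 1 < ss.length ∧ (⟨e.1, ⟨(e.2 : ℕ) + 1, h⟩⟩ : Ent G) ∈ stkOf G ss (i + 1) := by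
  have hi : i < ss.length := mem_stk_lt G he
  have hsh : (⟨e.1, ⟨(e.2 : ℕ) + 1, h⟩⟩ : Ent G) ∈ shift G (stkOf G ss i) :=
    mem_filterMap.2 ⟨e, he, by unfold shiftE; rw [dif_pos h]⟩
  have hi1 : i + 1 < ss.length := by
    by_contra h1
    have hieq : i = ss.length - 1 := by omega
    rw [getLastD_stk, ← hieq] at hf
    rw [hf] at hsh
    exact absurd hsh (not_mem_nil)
  have hn := chain_succ G hch hi1
  unfold nxt at hn
  rw [← hn] at hsh
  exact ⟨hi1, (mem_filter.1 hsh).1⟩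

lemma pred_mem (hch : List.Chain' (nxt G) ([] :: ss))
    {i : ℕ} {e : Ent G} (he : e ∈ stkOf G ss i) (hk : (e.2 : ℕ) ≠ 0) :
    1 ≤ i ∧ ∃ (h2 : (e.2 : ℕ) - 1 < e.1.1.length),
      (⟨e.1, ⟨(e.2 : ℕ) - 1, h2⟩⟩ : Ent G) ∈ stkOf G ss (i - 1) := by
  have hi : i < ss.length := mem_stk_lt G he
  have hef : e ∈ (stkOf G ss i).filter (fun e => decide ((e.2 : ℕ) ≠ 0)) :=
    mem_filter.2 ⟨he, by simpa using hk⟩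
  cases i with
  | zero =>
    have h0 := chain_zero G hch hi
    unfold nxt at h0
    rw [h0] at hef
    unfold shift at hef
    simp at hef
  | succ j =>
    have hn := chain_succ G hch hi
    unfold nxt at hn
    rw [hn] at hef
    obtain ⟨e', he', hsh⟩ := mem_filterMap.1 hef
    unfold shiftE at hsh
    by_cases h' : (e'.2 : ℕ) + 1 < e'.1.1.length
    · rw [dif_pos h'] at hsh
      cases hsh
      refine ⟨by omega, ⟨by simpa using e'.2.isLt, ?_⟩⟩
      simpa using he'
    · rw [dif_neg h'] at hsh
      exact absurd hsh (by simp)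

lemma k_le (hch : List.Chain' (nxt G) ([] :: ss)) :
    ∀ i, ∀ e ∈ stkOf G ss i, (e.2 : ℕ) ≤ i := by
  intro i
  induction i with
  | zero =>
    intro e he
    by_contra h
    have := (pred_mem G hch he (by omega)).1
    omega
  | succ j ih =>
    intro e he
    by_cases h : (e.2 : ℕ) = 0
    · omega
    · obtain ⟨-, h2, hm⟩ := pred_mem G hch he h
      have h3 : (e.2 : ℕ) - 1 ≤ j := ih _ hm
      omega

lemma up_mem (hch : List.Chain' (nxt G) ([] :: ss)) (hf : shift G (ss.getLastD []) = []) :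
    ∀ d {i : ℕ} {e : Ent G}, e ∈ stkOf G ss i → ∀ (h : (e.2 : ℕ) + d < e.1.1.length),
      (⟨e.1, ⟨(e.2 : ℕ) + d, h⟩⟩ : Ent G) ∈ stkOf G ss (i + d) := by
  intro d
  induction d with
  | zero => intro i e he h; exact he
  | succ d ih =>
    intro i e he h
    have h1 : (e.2 : ℕ) + d < e.1.1.length := by omega
    have hm := ih he h1
    exact (succ_mem G hch hf hm h).2

lemma down_mem (hch : List.Chain' (nxt G) ([] :: ss)) :
    ∀ d {i : ℕ} {e : Ent G}, e ∈ stkOf G ss i → d ≤ (e.2 : ℕ) →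
      ∃ (h2 : (e.2 : ℕ) - d < e.1.1.length),
        (⟨e.1, ⟨(e.2 : ℕ) - d, h2⟩⟩ : Ent G) ∈ stkOf G ss (i - d) := by
  intro d
  induction d with
  | zero => intro i e he _; exact ⟨by simpa using e.2.isLt, he⟩
  | succ d ih =>
    intro i e he hd
    obtain ⟨-, h2, hm⟩ := pred_mem G hch he (by omega)
    obtain ⟨h3, hm2⟩ := ih hm (by omega : d ≤ (e.2 : ℕ) - 1)
    refine ⟨by omega, ?_⟩
    have hv := ent_eq G (g := e.1) h3 (by omega : (e.2 : ℕ) - (d+1) < e.1.1.length)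
      (by omega : (e.2 : ℕ) - 1 - d = (e.2 : ℕ) - (d + 1))
    rw [hv] at hm2
    rw [show i - 1 - d = i - (d + 1) by omega] at hm2
    exact hm2

lemma all_mem (hch : List.Chain' (nxt G) ([] :: ss)) (hf : shift G (ss.getLastD []) = [])
    {i : ℕ} {e : Ent G} (he : e ∈ stkOf G ss i) {j : ℕ}
    (h1 : i - (e.2 : ℕ) ≤ j) (h2 : j < i - (e.2 : ℕ) + e.1.1.length) :
    ∃ (hj : j - (i - (e.2 : ℕ)) < e.1.1.length),
      (⟨e.1, ⟨j - (i - (e.2 : ℕ)), hj⟩⟩ : Ent G) ∈ stkOf G ss j := by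
  have hk := k_le G hch i e he
  have hkl := e.2.isLt
  rcases le_or_gt i j with hij | hij
  · have h : (e.2 : ℕ) + (j - i) < e.1.1.length := by omega
    have hm := up_mem G hch hf (j - i) he h
    refine ⟨by omega, ?_⟩
    rw [show i + (j - i) = j by omega] at hm
    have hv := ent_eq G (g := e.1) h (by omega : j - (i - (e.2 : ℕ)) < e.1.1.length)
      (by omega : (e.2 : ℕ) + (j - i) = j - (i - (e.2 : ℕ)))
    rw [hv] at hm
    exact hm
  · obtain ⟨h3, hm⟩ := down_mem G hch (i - j) he (by omega)
    refine ⟨by omega, ?_⟩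
    have hv := ent_eq G (g := e.1) h3 (by omega : j - (i - (e.2 : ℕ)) < e.1.1.length)
      (by omega : (e.2 : ℕ) - (i - j) = j - (i - (e.2 : ℕ)))
    rw [hv] at hm
    rw [show i - (i - j) = j by omega] at hm
    exact hm

/-! ### from certificates to write lists -/

def wrt (i : ℕ) (e : Ent G) : Wr G := (e.1, i - (e.2 : ℕ))

lemma exists_glist (hch : List.Chain' (nxt G) ([] :: ss))
    (hf : shift G (ss.getLastD []) = []) (hnd : ∀ s ∈ ss, s.Nodup) :
    ∀ n, n ≤ ss.length → ∃ Lh : List (Wr G), Lh.Nodup ∧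
      (∀ i, i < n → ((stkOf G ss i).map (wrt G i)).Sublist Lh) ∧
      (∀ w ∈ Lh, ∃ i, i < n ∧ ∃ e ∈ stkOf G ss i, w = wrt G i e) := by
  intro n
  induction n with
  | zero => exact fun _ => ⟨[], nodup_nil, fun i hi => by omega, fun w hw => by simp at hw⟩
  | succ n ih =>
    intro hn
    obtain ⟨Lh, hLnd, hLsub, hLcar⟩ := ih (by omega)
    set c := (stkOf G ss n).map (wrt G n) with hc
    have hkle : ∀ e ∈ stkOf G ss n, (e.2 : ℕ) ≤ n := k_le G hch n
    have hfilter : c.filter (fun w => decide (w.2 < n)) =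
        ((stkOf G ss n).filter (fun e => decide ((e.2 : ℕ) ≠ 0))).map (wrt G n) := by
      rw [hc, filter_map]
      congr 1
      apply filter_congr
      intro e he
      have := hkle e he
      simp only [Function.comp, wrt]
      exact decide_eq_decide.2 (by omega)
    have hsubfilter : (c.filter (fun w => decide (w.2 < n))).Sublist Lh := by
      rcases Nat.eq_zero_or_pos n with rfl | hpos
      · have h0 := chain_zero G hch (by omega)
        unfold nxt at h0
        rw [hfilter, h0]
        unfold shift
        simp
      · have hn1 : (n - 1) + 1 < ss.length := by omega
        have hnx := chain_succ G hch hn1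
        rw [show n - 1 + 1 = n by omega] at hnx
        unfold nxt at hnx
        rw [hfilter, hnx]
        have hshiftmap : (shift G (stkOf G ss (n-1))).map (wrt G n) =
            ((stkOf G ss (n-1)).filter
              (fun e => decide ((e.2 : ℕ) + 1 < e.1.1.length))).map (wrt G (n-1)) := by
          unfold shift
          rw [map_filterMap, ← filterMap_eq_map, filterMap_filter]
          apply filterMap_congr
          intro e _
          unfold shiftE
          by_cases h : (e.2 : ℕ) + 1 < e.1.1.length
          · rw [dif_pos h, if_pos (by simpa using h)]
            simp only [Option.map_some, Function.comp_apply, Option.some_inj]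
            unfold wrt
            exact congrArg (Prod.mk e.1) (by omega : n - ((e.2 : ℕ) + 1) = n - 1 - (e.2 : ℕ))
          · rw [dif_neg h, if_neg (by simpa using h)]
            rfl
        rw [hshiftmap]
        exact (filter_sublist.map _).trans (hLsub (n-1) (by omega))
    have hfresh : ∀ x ∈ c, (fun w => decide (w.2 < n)) x = false → x ∉ Lh := by
      intro x hx hQx hmem
      obtain ⟨e, he, rfl⟩ := mem_map.1 hx
      have h1 := hkle e he
      simp only [wrt, decide_eq_false_iff_not, not_lt] at hQx
      have h2 : (e.2 : ℕ) = 0 := by simp at hQx; omega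
      obtain ⟨j, hj, e', he', hei⟩ := hLcar _ hmem
      have h3 := k_le G hch j e' he'
      have : n - (e.2 : ℕ) = j - (e'.2 : ℕ) := congrArg Prod.snd hei
      omega
    have hstkmem : stkOf G ss n ∈ ss := by
      rw [stkOf_lt G (by omega : n < ss.length)]
      exact getElem_mem _
    have hcnd : c.Nodup := by
      refine Nodup.map_on ?_ (hnd _ hstkmem)
      intro e he e' he' hww
      have h1 := hkle e he
      have h2 := hkle e' he'
      obtain ⟨g, k⟩ := e
      obtain ⟨g', k'⟩ := e'
      simp only [wrt, Prod.mk.injEq] at hww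
      obtain ⟨rfl, hsnd⟩ := hww
      have h1' : (k : ℕ) ≤ n := h1
      have h2' : (k' : ℕ) ≤ n := h2
      have hkk : (k : ℕ) = (k' : ℕ) := by omega
      exact congrArg _ (Fin.ext hkk)
    obtain ⟨L', hsub1, hsub2, hnd', hcar'⟩ := ins_lemma _ c Lh hcnd hsubfilter hfresh hLnd
    refine ⟨L', hnd', ?_, ?_⟩
    · intro i hi
      rcases Nat.lt_or_ge i n with h | h
      · exact (hLsub i h).trans hsub1
      · have : i = n := by omega
        subst this
        exact hsub2
    · intro w hw
      rcases hcar' w hw with h | h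
      · obtain ⟨i, hi, e, he, hei⟩ := hLcar w h
        exact ⟨i, by omega, e, he, hei⟩
      · obtain ⟨e, he, rfl⟩ := mem_map.1 h
        exact ⟨n, by omega, e, he, rfl⟩

lemma cert_to_P (hsim : Equivalence sim) {u v : List α}
    (hc : Cert' sim G u v ss) (hf : shift G (ss.getLastD []) = []) : Pspec sim G u v := by
  obtain ⟨hlss, hlv, hch, hnd, hsimo, houto⟩ := hc
  obtain ⟨os, hosnd, hsubs, hcar⟩ := exists_glist G hch hf hnd ss.length le_rfl
  have hcov : ∀ w ∈ os, ∀ i, covers G w i → ∃ (hj : i - w.2 < w.1.1.length),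
      (⟨w.1, ⟨i - w.2, hj⟩⟩ : Ent G) ∈ stkOf G ss i := by
    intro w hw i hcovi
    obtain ⟨j, hj, e, he, rfl⟩ := hcar w hw
    obtain ⟨hj2, hm⟩ := all_mem G hch hf he hcovi.1 (by
      have h2 := hcovi.2
      unfold wlen at h2
      exact h2)
    exact ⟨hj2, hm⟩
  refine ⟨os, hosnd, ?_, hlv, ?_⟩
  · intro w hw
    obtain ⟨j, hjlt, e, he, rfl⟩ := hcar w hw
    have hk := k_le G hch j e he
    have hkl := e.2.isLt
    have hup : (e.2 : ℕ) + (e.1.1.length - 1 - (e.2 : ℕ)) < e.1.1.length := by omega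
    have hm := up_mem G hch hf _ he hup
    have hbd : (j - (e.2 : ℕ)) + e.1.1.length ≤ ss.length := by
      have := mem_stk_lt G hm
      omega
    constructor
    · show (j - (e.2 : ℕ)) + wlen G (wrt G j e) ≤ u.length
      unfold wlen
      show (j - (e.2 : ℕ)) + e.1.1.length ≤ u.length
      omega
    · rw [forall₂_iff_get]
      constructor
      · simp only [length_take, length_drop]
        show min (wlen G (wrt G j e)) (u.length - (j - (e.2 : ℕ))) = (wrt G j e).1.1.length
        unfold wlen
        show min e.1.1.length (u.length - (j - (e.2 : ℕ))) = e.1.1.length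
        omega
      · intro j0 hj1 hj2
        have hj2' : j0 < e.1.1.length := hj2
        obtain ⟨hjx, hmx⟩ := all_mem G hch hf he (j := (j - (e.2 : ℕ)) + j0) (by omega) (by omega)
        have hvx := ent_eq G (g := e.1) hjx hj2'
          (by omega : (j - (e.2 : ℕ)) + j0 - (j - (e.2 : ℕ)) = j0)
        rw [hvx] at hmx
        obtain ⟨a, hua, hsima⟩ := hsimo ((j - (e.2 : ℕ)) + j0) _ hmx
        have hlt : (j - (e.2 : ℕ)) + j0 < u.length := by omega
        rw [getElem?_eq_getElem hlt] at hua
        have hval : ((u.drop (wrt G j e).2).take (wlen G (wrt G j e))).get ⟨j0, hj1⟩ =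
            u[(j - (e.2 : ℕ)) + j0] := by
          simp only [get_eq_getElem, getElem_take, getElem_drop]
          rfl
        simp only [get_eq_getElem] at hval ⊢
        rw [hval, Option.some_inj.1 hua]
        exact hsima
  · intro i
    rw [houto i]
    rcases hstk : stkOf G ss i with _ | ⟨e, rest⟩
    · have hnone : os.find? (fun w => decide (covers G w i)) = none := by
        rw [find?_eq_none]
        intro w hw hdec
        have hcovi : covers G w i := of_decide_eq_true hdec
        obtain ⟨hj, hm⟩ := hcov w hw i hcovi
        rw [hstk] at hm
        exact absurd hm (not_mem_nil)
      simp only [outv, resolve, hstk, hnone, head?_nil]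
    · have hestk : e ∈ stkOf G ss i := by rw [hstk]; exact mem_cons_self
      have hilt : i < ss.length := mem_stk_lt G hestk
      have hsubmap := hsubs i hilt
      have hfind : os.find? (fun w => decide (covers G w i)) = some (wrt G i e) := by
        have hhead : ((stkOf G ss i).map (wrt G i)).head? = some (wrt G i e) := by
          rw [hstk]; rfl
        rw [← hhead]
        apply find?_eq_head? _ hsubmap hosnd
        · intro x hx
          constructor
          · intro hdec
            have hcovi : covers G x i := of_decide_eq_true hdec
            obtain ⟨hj, hm⟩ := hcov x hx i hcovi
            refine mem_map.2 ⟨_, hm, ?_⟩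
            show (x.1, i - (i - x.2)) = x
            have hxx : i - (i - x.2) = x.2 := by
              have := hcovi.1
              omega
            rw [hxx]
          · intro hxin
            obtain ⟨e', he', rfl⟩ := mem_map.1 hxin
            have hk := k_le G hch i e' he'
            have hl := e'.2.isLt
            refine decide_eq_true ?_
            have hc1 : i - (e'.2 : ℕ) ≤ i := by omega
            have hc2 : i < i - (e'.2 : ℕ) + e'.1.1.length := by omega
            exact ⟨hc1, hc2⟩
        · intro x hxin
          obtain ⟨e', he', rfl⟩ := mem_map.1 hxin
          have hk := k_le G hch i e' he'
          have hl := e'.2.isLt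
          refine decide_eq_true ?_
          have hc1 : i - (e'.2 : ℕ) ≤ i := by omega
          have hc2 : i < i - (e'.2 : ℕ) + e'.1.1.length := by omega
          exact ⟨hc1, hc2⟩
      have hk := k_le G hch i e hestk
      have hik : i - (i - (e.2 : ℕ)) = (e.2 : ℕ) := by omega
      simp only [outv, resolve, hstk, hfind, head?_cons]
      show some (eltr G e) = e.1.1[i - (i - (e.2 : ℕ))]?
      rw [hik, getElem?_eq_getElem e.2.isLt]
      rfl

/-! ### from write lists to certificates -/

lemma find?_congr' {β : Type} (p q : β → Bool) :
    ∀ l : List β, (∀ x ∈ l, p x = q x) → l.find? p = l.find? q := by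
  intro l
  induction l with
  | nil => intro _; rfl
  | cons a l ih =>
    intro h
    rcases hq : q a with _ | _
    · rw [find?_cons_of_neg (by rw [h a (mem_cons_self)]; simp [hq]),
        find?_cons_of_neg (by simp [hq])]
      exact ih (fun x hx => h x (mem_cons_of_mem a hx))
    · rw [find?_cons_of_pos (by rw [h a (mem_cons_self)]; simp [hq]),
        find?_cons_of_pos (by simp [hq])]

def fe (i : ℕ) (w : Wr G) : Option (Ent G) :=
  if h : covers G w i then
    some ⟨w.1, ⟨i - w.2, by unfold covers wlen at h; omega⟩⟩
  else none

lemma P_to_cert (hsim : Equivalence sim) {u v : List α} (hp : Pspec sim G u v) :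
    ∃ ss : List (List (Ent G)), Cert' sim G u v ss ∧ shift G (ss.getLastD []) = [] := by
  obtain ⟨os, hosnd, hok, hlv, hres⟩ := hp
  have hinb : ∀ w ∈ os, w.2 + w.1.1.length ≤ u.length := by
    intro w hw
    have := (hok w hw).1
    unfold inb wlen at this
    exact this
  set stk : ℕ → List (Ent G) := fun i => os.filterMap (fe G i) with hstkdef
  set SS : List (List (Ent G)) := List.ofFn (fun i : Fin u.length => stk i) with hSS
  have hlen : SS.length = u.length := by rw [hSS, length_ofFn]
  have hstkOf : ∀ i, i < u.length → stkOf G SS i = stk i := by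
    intro i hi
    rw [stkOf_lt G (by omega : i < SS.length)]
    exact List.getElem_ofFn _
  have hstkOf' : ∀ i, u.length ≤ i → stkOf G SS i = [] := fun i hi => stkOf_ge G (by omega)
  have hmem_fe : ∀ i (w : Wr G) (e : Ent G), fe G i w = some e →
      covers G w i ∧ e.1 = w.1 ∧ (e.2 : ℕ) = i - w.2 := by
    intro i w e hfe
    unfold fe at hfe
    by_cases hc : covers G w i
    · rw [dif_pos hc] at hfe
      obtain rfl := Option.some_inj.1 hfe
      exact ⟨hc, rfl, rfl⟩
    · rw [dif_neg hc] at hfe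
      exact absurd hfe (by simp)
  refine ⟨SS, ⟨hlen, hlv, ?_, ?_, ?_, ?_⟩, ?_⟩
  · -- chain
    rw [List.Chain', isChain_iff_getElem]
    intro i hi
    simp only [length_cons, hlen] at hi
    have hival : i < u.length := by omega
    match i with
    | 0 =>
      have hg0 : ([] :: SS)[0]'(by simp) = [] := rfl
      have hg1 : ([] :: SS)[1]'(by simp; omega) = stkOf G SS 0 := by
        simp only [get_eq_getElem, getElem_cons_succ]
        rw [stkOf_lt G (by omega)]
      rw [hg0, hg1, hstkOf 0 (by omega)]
      unfold nxt
      rw [hstkdef]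
      simp only
      rw [filter_filterMap]
      have : ∀ w ∈ os, (fe G 0 w).filter (fun e => decide ((e.2 : ℕ) ≠ 0)) = none := by
        intro w hw
        unfold fe
        by_cases hc : covers G w 0
        · rw [dif_pos hc]
          have : (0 : ℕ) - w.2 = 0 := by omega
          simp [Option.filter, this]
        · rw [dif_neg hc]
          rfl
      rw [filterMap_congr (f := fun w => (fe G 0 w).filter (fun e => decide ((e.2 : ℕ) ≠ 0)))
        (g := fun _ => none) this]
      simp [shift]
    | (j+1) =>
      have hg0 : ([] :: SS)[j+1]'(by simp; omega) = stkOf G SS j := by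
        simp only [get_eq_getElem, getElem_cons_succ]
        rw [stkOf_lt G (by omega)]
      have hg1 : ([] :: SS)[j+1+1]'(by simp; omega) = stkOf G SS (j+1) := by
        simp only [get_eq_getElem, getElem_cons_succ]
        rw [stkOf_lt G (by omega)]
      rw [hg0, hg1, hstkOf j (by omega), hstkOf (j+1) (by omega)]
      unfold nxt
      rw [hstkdef]
      simp only
      rw [filter_filterMap]
      unfold shift
      rw [filterMap_filterMap]
      apply filterMap_congr
      intro w hw
      unfold fe shiftE
      by_cases h1 : covers G w j <;> by_cases h2 : covers G w (j+1) <;>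
        obtain ⟨hw1, hw2⟩ : w.2 ≤ w.2 ∧ w.2 + wlen G w ≤ u.length :=
          ⟨le_refl _, hinb w hw⟩
      · -- both
        rw [dif_pos h2, dif_pos h1]
        unfold covers at h1 h2
        have hk1 : j + 1 - w.2 ≠ 0 := by omega
        have hk2 : (j - w.2) + 1 < w.1.1.length := by unfold wlen at h1 h2 hw2; omega
        simp only [Option.filter, Option.bind_some]
        rw [if_pos (by simpa using hk1), dif_pos hk2]
        exact congrArg some (ent_eq G _ _ (by omega))
      · -- covers j only : j+1 = w.2 + len
        rw [dif_neg h2, dif_pos h1]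
        unfold covers at h1 h2
        have hk2 : ¬ ((j - w.2) + 1 < w.1.1.length) := by unfold wlen at h1 h2; omega
        simp only [Option.bind_some]
        rw [dif_neg hk2]
        rfl
      · -- covers j+1 only : w.2 = j+1, fresh entry, filtered out
        rw [dif_pos h2, dif_neg h1]
        unfold covers at h1 h2
        have hk1 : j + 1 - w.2 = 0 := by omega
        simp [Option.filter, hk1]
      · rw [dif_neg h2, dif_neg h1]
        rfl
  · -- nodup
    intro s hs
    rw [hSS] at hs
    obtain ⟨i, rfl⟩ := mem_ofFn.1 hs
    refine hosnd.filterMap ?_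
    intro w w' e hmw hmw'
    obtain ⟨hc, he1, he2⟩ := hmem_fe _ w e (by simpa using hmw)
    obtain ⟨hc', he1', he2'⟩ := hmem_fe _ w' e (by simpa using hmw')
    have hna : w.2 ≤ (i : ℕ) := hc.1
    have hnb : w'.2 ≤ (i : ℕ) := hc'.1
    refine Prod.ext (he1 ▸ he1' ▸ rfl) ?_
    have heq : (i : ℕ) - w.2 = (i : ℕ) - w'.2 := by rw [← he2, ← he2']
    omega
  · -- simo
    intro i e he
    have hi : i < u.length := by
      have := mem_stk_lt G he
      omega
    rw [hstkOf i hi] at he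
    obtain ⟨w, hw, hfe⟩ := mem_filterMap.1 he
    obtain ⟨hc, he1, he2⟩ := hmem_fe i w e hfe
    obtain ⟨a, b, hua, hwb, hab⟩ := appOK_sim hsim (hok w hw) hc
    refine ⟨a, hua, ?_⟩
    have hlb : i - w.2 < w.1.1.length := by
      obtain ⟨hc1, hc2⟩ := hc
      unfold wlen at hc2
      omega
    rw [getElem?_eq_getElem hlb, Option.some_inj] at hwb
    have : eltr G e = b := by
      rw [← hwb]
      unfold eltr
      obtain ⟨g, k⟩ := e
      simp only at he1 he2
      subst he1
      simp only [get_eq_getElem]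
      congr 1
    rw [this]
    exact hab
  · -- outo
    intro i
    rw [hres i]
    unfold resolve outv
    rcases Nat.lt_or_ge i u.length with hi | hi
    · rw [hstkOf i hi, hstkdef]
      simp only
      rw [head?_filterMap]
      have hpq : (os.find? fun a => (fe G i a).isSome) =
          os.find? fun w => decide (covers G w i) := by
        apply find?_congr'
        intro w _
        show (fe G i w).isSome = decide (covers G w i)
        by_cases hc : covers G w i
        · unfold fe; rw [dif_pos hc]; simp [hc]
        · unfold fe; rw [dif_neg hc]; simp [hc]
      rw [hpq]
      rcases hfind : os.find? (fun w => decide (covers G w i)) with _ | w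
      · simp only [Option.bind_none]
      · have hc : covers G w i := by
          have := List.find?_some hfind
          simpa using this
        have hlb : i - w.2 < w.1.1.length := by
          obtain ⟨hc1, hc2⟩ := hc
          unfold wlen at hc2
          omega
        simp only [Option.bind_some]
        unfold fe
        rw [dif_pos hc]
        simp only
        rw [getElem?_eq_getElem hlb]
        rfl
    · rw [hstkOf' i hi]
      simp only [head?_nil]
      have hnone : os.find? (fun w => decide (covers G w i)) = none := by
        rw [find?_eq_none]
        intro w hw hdec
        have hc : covers G w i := of_decide_eq_true hdec
        have := hinb w hw
        have hc2 := hc.2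
        unfold wlen at hc2
        have hc1 := hc.1
        omega
      rw [hnone]
  · -- final
    rcases Nat.eq_zero_or_pos u.length with h0 | hpos
    · have hSSnil : SS = [] := length_eq_zero_iff.1 (by rw [hlen]; exact h0)
      rw [hSSnil]
      rfl
    · rw [getLastD_stk, hlen, hstkOf (u.length - 1) (by omega), hstkdef]
      unfold shift
      simp only
      rw [filterMap_filterMap]
      have : ∀ w ∈ os, (fe G (u.length - 1) w).bind (shiftE G) = none := by
        intro w hw
        have hb := hinb w hw
        unfold fe shiftE
        by_cases hc : covers G w (u.length - 1)
        · rw [dif_pos hc]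
          simp only [Option.bind_some]
          rw [dif_neg (by
            have hc2 := hc.2
            have hc1 := hc.1
            unfold wlen at hc2
            omega)]
        · rw [dif_neg hc]
          rfl
      rw [filterMap_congr (g := fun _ => none) this]
      simp

/-! ### the NFA -/

lemma getLast?_cons' {β : Type} (x : β) (l : List β) :
    (x :: l).getLast? = some (l.getLastD x) := by
  induction l generalizing x with
  | nil => rfl
  | cons y l ih => rw [getLast?_cons_cons, ih, getLastD_cons]

lemma getLastD_concat' {β : Type} (d a : β) (l : List β) : (l ++ [a]).getLastD d = a := by
  rw [getLastD_eq_getLast?, getLast?_concat]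
  rfl

lemma mem_getLastD {β : Type} (d : β) {l : List β} (h : l ≠ []) : l.getLastD d ∈ l := by
  cases l with
  | nil => exact absurd rfl h
  | cons x l =>
    have := getLast?_cons' x l
    have h2 : (x :: l).getLast? = some ((x :: l).getLast (by simp)) := getLast?_eq_getLast _
    rw [this] at h2
    rw [getLastD_cons]
    rw [show l.getLastD x = (x :: l).getLast (by simp) from Option.some_inj.1 h2]
    exact getLast_mem _

lemma stkOf_append_left {t : List (Ent G)} {i : ℕ} (h : i < ss.length) :
    stkOf G (ss ++ [t]) i = stkOf G ss i := by
  unfold stkOf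
  rw [getElem?_append_left (by omega)]

lemma stkOf_append_right (t : List (Ent G)) : stkOf G (ss ++ [t]) ss.length = t := by
  unfold stkOf
  rw [getElem?_append_right (le_refl _)]
  simp

def outl (b : α) (t : List (Ent G)) : α :=
  match t.head? with
  | some e => eltr G e
  | none => b

def theNFA {σ : Type} (M : DFA α σ) : NFA α (σ × {l : List (Ent G) // l.Nodup}) where
  step := fun qs a =>
    {qt | ∃ b : α, qt.1 = M.step qs.1 b ∧ nxt G qs.2.1 qt.2.1 ∧
      (∀ e ∈ qt.2.1, sim b (eltr G e)) ∧ a = outl G b qt.2.1}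
  start := {(M.start, ⟨[], nodup_nil⟩)}
  accept := {qs | qs.1 ∈ M.accept ∧ shift G qs.2.1 = []}

lemma eval_iff {σ : Type} (M : DFA α σ) (v : List α) (q : σ)
    (s : {l : List (Ent G) // l.Nodup}) :
    (q, s) ∈ (theNFA sim G M).eval v ↔
      ∃ u ss, Cert' sim G u v ss ∧ M.evalFrom M.start u = q ∧ ss.getLastD [] = s.1 := by
  induction v using List.reverseRecOn generalizing q s with
  | nil =>
    show (q, s) ∈ (theNFA sim G M).start ↔ _
    constructor
    · intro h
      simp only [theNFA, Set.mem_singleton_iff, Prod.mk.injEq] at h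
      obtain ⟨rfl, rfl⟩ := h
      refine ⟨[], [], ⟨rfl, rfl, isChain_singleton _, by simp, ?_, ?_⟩, rfl, rfl⟩
      · intro i e he
        rw [stkOf_ge G (by simp)] at he
        exact absurd he (not_mem_nil)
      · intro i
        unfold outv
        rw [stkOf_ge G (by simp)]
        rfl
    · rintro ⟨u, ss, ⟨hlss, hlv, _, _, _, _⟩, hq, hs⟩
      have hu : u = [] := length_eq_zero_iff.1 (by simpa using hlv.symm)
      subst hu
      have hss : ss = [] := length_eq_zero_iff.1 (by simpa using hlss)
      subst hss
      simp only [theNFA, Set.mem_singleton_iff, Prod.mk.injEq]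
      exact ⟨hq.symm, Subtype.ext hs.symm⟩
  | append_singleton v a ih =>
    rw [NFA.eval_append_singleton, NFA.mem_stepSet]
    constructor
    · rintro ⟨⟨q0, s0⟩, hev, hstep⟩
      obtain ⟨u, ss, ⟨hlss, hlv, hch, hnd, hsimo, houto⟩, hq0, hs0⟩ := (ih q0 s0).1 hev
      obtain ⟨b, hq, hnxt, hsime, ha⟩ := hstep
      refine ⟨u ++ [b], ss ++ [s.1], ⟨by simp [hlss], by simp [hlv], ?_, ?_, ?_, ?_⟩, ?_, ?_⟩
      · rw [show ([] : List (Ent G)) :: (ss ++ [s.1]) = ([] :: ss) ++ [s.1] from rfl,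
          List.Chain', isChain_append]
        refine ⟨hch, isChain_singleton _, ?_⟩
        intro x hx y hy
        rw [getLast?_cons'] at hx
        simp only [head?_cons, Option.mem_def, Option.some_inj] at hx hy
        subst hx
        subst hy
        rw [hs0]
        exact hnxt
      · intro t ht
        rcases mem_append.1 ht with h | h
        · exact hnd t h
        · rw [mem_singleton.1 h]
          exact s.2
      · intro i e he
        rcases Nat.lt_trichotomy i u.length with hi | hi | hi
        · rw [stkOf_append_left G (by omega)] at he
          obtain ⟨x, hx, hsimx⟩ := hsimo i e he
          refine ⟨x, ?_, hsimx⟩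
          rwa [getElem?_append_left (by omega)]
        · subst hi
          rw [← hlss, stkOf_append_right G] at he
          refine ⟨b, ?_, hsime e he⟩
          rw [getElem?_append_right (le_refl _)]
          simp
        · rw [stkOf_ge G (by simp; omega)] at he
          exact absurd he (not_mem_nil)
      · intro i
        rcases Nat.lt_trichotomy i u.length with hi | hi | hi
        · rw [getElem?_append_left (by omega : i < v.length), houto i]
          unfold outv
          rw [stkOf_append_left G (by omega), getElem?_append_left (by omega)]
        · subst hi
          have hstk : stkOf G (ss ++ [s.1]) u.length = s.1 := by
            conv_lhs => rw [← hlss]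
            exact stkOf_append_right G s.1
          have hva : ((v ++ [a]) : List α)[u.length]? = some a := by
            rw [getElem?_append_right (by omega)]
            rw [show u.length - v.length = 0 by omega]
            rfl
          rw [hva, ha]
          unfold outv outl
          rw [hstk]
          rcases hh : (s.1 : List (Ent G)).head? with _ | e
          · simp only [hh]
            rw [getElem?_append_right (le_refl _)]
            simp
          · simp only [hh]
        · have h1 : ((v ++ [a]) : List α)[i]? = none := getElem?_eq_none (by simp; omega)
          have h2 : ((u ++ [b]) : List α)[i]? = none := getElem?_eq_none (by simp; omega)
          rw [h1]
          unfold outv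
          rw [stkOf_ge G (by simp; omega)]
          simp only [head?_nil]
          exact h2.symm
      · rw [DFA.evalFrom_append_singleton, hq0]
        exact hq.symm
      · rw [getLastD_concat']
    · rintro ⟨u, ss, ⟨hlss, hlv, hch, hnd, hsimo, houto⟩, hq, hs⟩
      rcases List.eq_nil_or_concat u with rfl | ⟨u0, b, rfl⟩
      · simp at hlv
      rcases List.eq_nil_or_concat ss with hssnil | ⟨ss0, t, rfl⟩
      · rw [hssnil] at hlss
        simp at hlss
      simp only [concat_eq_append] at hlv hlss hq hch hnd hs hsimo houto
      have hlu : v.length = u0.length := by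
        simp only [length_append, length_cons, length_nil] at hlv
        omega
      have hlss0 : ss0.length = u0.length := by
        simp only [length_append, length_cons, length_nil] at hlss
        omega
      have hs1t : s.1 = t := by rw [← hs, getLastD_concat']
      have hndt : (ss0.getLastD []).Nodup := by
        rcases eq_or_ne ss0 [] with rfl | hne
        · exact nodup_nil
        · exact hnd _ (mem_append.2 (Or.inl (mem_getLastD _ hne)))
      have hchsplit := isChain_append.1
        (show Chain' (nxt G) (([] :: ss0) ++ [t]) from hch)
      have hcross : nxt G (ss0.getLastD []) t := by
        refine hchsplit.2.2 _ ?_ t (by simp)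
        rw [getLast?_cons']
        rfl
      refine ⟨(M.evalFrom M.start u0, ⟨ss0.getLastD [], hndt⟩), ?_, ?_⟩
      · refine (ih _ _).2 ⟨u0, ss0, ⟨hlss0, hlu, ?_, ?_, ?_, ?_⟩, rfl, rfl⟩
        · exact hchsplit.1
        · exact fun x hx => hnd x (mem_append.2 (Or.inl hx))
        · intro i e he
          have hi : i < ss0.length := mem_stk_lt G he
          have he' : e ∈ stkOf G (ss0 ++ [t]) i := by rwa [stkOf_append_left G hi]
          obtain ⟨x, hx, hsimx⟩ := hsimo i e he'
          refine ⟨x, ?_, hsimx⟩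
          rwa [getElem?_append_left (by omega)] at hx
        · intro i
          rcases Nat.lt_or_ge i v.length with hi | hi
          · have hthis := houto i
            rw [getElem?_append_left hi] at hthis
            rw [hthis]
            unfold outv
            rw [stkOf_append_left G (by omega), getElem?_append_left (by omega)]
          · rw [getElem?_eq_none (by omega)]
            unfold outv
            rw [stkOf_ge G (by omega), getElem?_eq_none (by omega)]
            rfl
      · show _ ∈ (theNFA sim G M).step _ a
        refine ⟨b, ?_, ?_, ?_, ?_⟩
        · rw [← hq, DFA.evalFrom_append_singleton]
        · rw [hs1t]
          exact hcross
        · rw [hs1t]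
          intro e he
          have he' : e ∈ stkOf G (ss0 ++ [t]) u0.length := by
            rw [← hlss0, stkOf_append_right G]
            exact he
          obtain ⟨x, hx, hsimx⟩ := hsimo u0.length e he'
          rw [getElem?_append_right (le_refl _)] at hx
          simp only [Nat.sub_self, getElem?_cons_zero, Option.some_inj] at hx
          rw [hx]
          exact hsimx
        · rw [hs1t]
          have hstk2 : stkOf G (ss0 ++ [t]) v.length = t := by
            rw [show v.length = ss0.length by omega]
            exact stkOf_append_right G t
          have hva : ((v ++ [a]) : List α)[v.length]? = some a := by
            rw [getElem?_append_right (le_refl _)]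
            simp
          have hthis := houto v.length
          rw [hva] at hthis
          unfold outv at hthis
          rw [hstk2] at hthis
          unfold outl
          rcases hh : t.head? with _ | e
          · simp only [hh] at hthis ⊢
            have hub : ((u0 ++ [b]) : List α)[v.length]? = some b := by
              rw [show v.length = u0.length from hlu, getElem?_append_right (le_refl _)]
              simp
            rw [hub] at hthis
            exact Option.some_inj.1 hthis
          · simp only [hh] at hthis ⊢
            exact Option.some_inj.1 hthis

lemma accepts_iff {σ : Type} (M : DFA α σ) (v : List α) :
    v ∈ (theNFA sim G M).accepts ↔
      ∃ u ss, Cert' sim G u v ss ∧ shift G (ss.getLastD []) = [] ∧ u ∈ M.accepts := by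
  rw [NFA.mem_accepts]
  constructor
  · rintro ⟨⟨q, t⟩, hacc, hev⟩
    obtain ⟨u, ss, hcert, hq, hlast⟩ := (eval_iff sim G M v q t).1 hev
    obtain ⟨hqa, hsh⟩ := hacc
    refine ⟨u, ss, hcert, by rw [hlast]; exact hsh, ?_⟩
    show M.evalFrom M.start u ∈ M.accept
    rw [hq]
    exact hqa
  · rintro ⟨u, ss, hcert, hsh, hu⟩
    have hndl : (ss.getLastD []).Nodup := by
      rcases eq_or_ne ss [] with rfl | hne
      · exact nodup_nil
      · exact hcert.2.2.2.1 _ (mem_getLastD _ hne)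
    refine ⟨(M.evalFrom M.start u, ⟨ss.getLastD [], hndl⟩), ⟨hu, hsh⟩, ?_⟩
    exact (eval_iff sim G M v _ _).2 ⟨u, ss, hcert, rfl, rfl⟩

end GRW

/-- If `∼` is an equivalence (adjustment) relation on a finite
alphabet, `G` is a finite set of guides and `L` is regular, then
`L_G = { v | ∃ u ∈ L, u ⇒* v }` is regular. -/
theorem guided_rewriting_preserves_regularity
    {α : Type} [Fintype α] (sim : α → α → Prop) (hsim : Equivalence sim)
    (G : Set (List α)) (hG : G.Finite) (L : Language α) (hL : L.IsRegular) :
    Language.IsRegular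
      {v : List α | ∃ u ∈ L, Relation.ReflTransGen (GuidedStep sim G) u v} := by
  classical
  obtain ⟨σL, finL, M, hM⟩ := hL
  haveI : Finite (GRW.Gd G) := hG.to_subtype
  haveI : Finite (GRW.Ent G) := inferInstance
  haveI finNS : Finite {l : List (GRW.Ent G) // l.Nodup} := by
    haveI := Fintype.ofFinite (GRW.Ent G)
    refine Finite.of_injective
      (fun l : {l : List (GRW.Ent G) // l.Nodup} =>
        (fun i : Fin (Fintype.card (GRW.Ent G)) => l.1[(i : ℕ)]?)) ?_
    intro l l' h
    apply Subtype.ext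
    apply List.ext_getElem?
    intro i
    by_cases hi : i < Fintype.card (GRW.Ent G)
    · exact congrFun h ⟨i, hi⟩
    · rw [List.getElem?_eq_none (by have := l.2.length_le_card; omega),
        List.getElem?_eq_none (by have := l'.2.length_le_card; omega)]
  refine ⟨Set (σL × {l : List (GRW.Ent G) // l.Nodup}), Fintype.ofFinite _,
    (GRW.theNFA sim G M).toDFA, ?_⟩
  rw [NFA.toDFA_correct]
  ext v
  rw [show (v ∈ (GRW.theNFA sim G M).accepts) ↔ _ from GRW.accepts_iff sim G M v]
  constructor
  · rintro ⟨u, ss, hcert, hsh, hu⟩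
    exact ⟨u, hM ▸ hu, (GRW.reach_iff_P sim G hsim u v).2 (GRW.cert_to_P sim G hsim hcert hsh)⟩
  · rintro ⟨u, hu, hreach⟩
    obtain ⟨ss, hcert, hsh⟩ :=
      GRW.P_to_cert sim G hsim ((GRW.reach_iff_P sim G hsim u v).1 hreach)
    exact ⟨u, ss, hcert, hsh, hM.symm ▸ hu⟩
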